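/- If x satisfies x·w > k_th with ‖x‖² = d and k_th ∈ (0, √d·‖w‖), then the angle θ between x and w satisfies cos θ > k_th/(√d·‖w‖); consequently any two vectors x_r, x_s both satisfying this condition have inner product x_r·x_s > d·cos(2θ*), where θ* = arccos(k_th/(√d·‖w‖)). -/

import Mathlib

open InnerProductGeometry

lemma real_arith {A B I c : ℝ} (hc0 : 0 < c) (hA1 : A ≤ 1) (hB1 : B ≤ 1)
    (hAc : c < A) (hBc : c < B)
    (hkey : A * B - Real.sqrt (1 - A^2) * Real.sqrt (1 - B^2) ≤ I) :
    2*c^2 - 1 < I := by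
  have hA0 : 0 < A := lt_trans hc0 hAc
  have hB0 : 0 < B := lt_trans hc0 hBc
  have h1 : (0:ℝ) ≤ 1 - A^2 := by nlinarith
  have h2 : (0:ℝ) ≤ 1 - B^2 := by nlinarith
  have hsq : Real.sqrt (1 - A^2) * Real.sqrt (1 - B^2) ≤ 1 - (A^2 + B^2)/2 := by
    rw [← Real.sqrt_mul h1]
    have h3 : Real.sqrt ((1-A^2) * (1-B^2)) ≤ Real.sqrt ((1 - (A^2+B^2)/2)^2) := by
      apply Real.sqrt_le_sqrt
      nlinarith [sq_nonneg (A^2 - B^2)]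
    rwa [Real.sqrt_sq (by nlinarith)] at h3
  nlinarith [sq_nonneg (A + B - 2*c)]

lemma div_lt_div_same' {a b c : ℝ} (h : a < b) (hc : 0 < c) : a / c < b / c := by
  gcongr

lemma key_inner {E : Type*} [NormedAddCommGroup E] [InnerProductSpace ℝ E]
    (u v w : E) (hu : ‖u‖ = 1) (hv : ‖v‖ = 1) (hw : ‖w‖ = 1) :
    (inner ℝ u w : ℝ) * inner ℝ v w -
      Real.sqrt (1 - (inner ℝ u w : ℝ)^2) * Real.sqrt (1 - (inner ℝ v w : ℝ)^2)
      ≤ (inner ℝ u v : ℝ) := by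
  have hwr : (inner ℝ w w : ℝ) = 1 := by
    rw [real_inner_self_eq_norm_sq, hw]; norm_num
  have hur : (inner ℝ u u : ℝ) = 1 := by
    rw [real_inner_self_eq_norm_sq, hu]; norm_num
  have hvr : (inner ℝ v v : ℝ) = 1 := by
    rw [real_inner_self_eq_norm_sq, hv]; norm_num
  have hiv : (inner ℝ (u - (inner ℝ u w : ℝ) • w) (v - (inner ℝ v w : ℝ) • w) : ℝ)
      = inner ℝ u v - (inner ℝ u w : ℝ) * inner ℝ v w := by
    simp only [inner_sub_left, inner_sub_right, real_inner_smul_left, real_inner_smul_right,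
      hwr, real_inner_comm w v, real_inner_comm w u]
    ring
  have hnu : ‖u - (inner ℝ u w : ℝ) • w‖ = Real.sqrt (1 - (inner ℝ u w : ℝ)^2) := by
    have h2 : ‖u - (inner ℝ u w : ℝ) • w‖^2 = 1 - (inner ℝ u w : ℝ)^2 := by
      rw [← real_inner_self_eq_norm_sq]
      simp only [inner_sub_left, inner_sub_right, real_inner_smul_left, real_inner_smul_right,
        hwr, real_inner_comm w u, hur]
      ring
    rw [← h2, Real.sqrt_sq (norm_nonneg _)]
  have hnv : ‖v - (inner ℝ v w : ℝ) • w‖ = Real.sqrt (1 - (inner ℝ v w : ℝ)^2) := by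
    have h2 : ‖v - (inner ℝ v w : ℝ) • w‖^2 = 1 - (inner ℝ v w : ℝ)^2 := by
      rw [← real_inner_self_eq_norm_sq]
      simp only [inner_sub_left, inner_sub_right, real_inner_smul_left, real_inner_smul_right,
        hwr, real_inner_comm w v, hvr]
      ring
    rw [← h2, Real.sqrt_sq (norm_nonneg _)]
  have h := neg_le_of_abs_le
    (abs_real_inner_le_norm (u - (inner ℝ u w : ℝ) • w) (v - (inner ℝ v w : ℝ) • w))
  rw [hiv, hnu, hnv] at h
  linarith

theorem stmt_0 (d : ℕ) (hd : 0 < d) (w : EuclideanSpace ℝ (Fin d)) (hw : w ≠ 0)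
    (kth : ℝ) (hk0 : 0 < kth) (hk1 : kth < Real.sqrt d * ‖w‖) :
    (∀ x : EuclideanSpace ℝ (Fin d), ‖x‖ ^ 2 = (d : ℝ) →
      kth < (inner ℝ x w : ℝ) →
      kth / (Real.sqrt d * ‖w‖) < Real.cos (angle x w)) ∧
    (∀ xr xs : EuclideanSpace ℝ (Fin d), ‖xr‖ ^ 2 = (d : ℝ) → ‖xs‖ ^ 2 = (d : ℝ) →
      kth < (inner ℝ xr w : ℝ) → kth < (inner ℝ xs w : ℝ) →
      (d : ℝ) * Real.cos (2 * Real.arccos (kth / (Real.sqrt d * ‖w‖))) <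
        (inner ℝ xr xs : ℝ)) := by
  have hdr : (0:ℝ) < (d:ℝ) := by exact_mod_cast hd
  have hdpos : (0:ℝ) < Real.sqrt d := Real.sqrt_pos.2 hdr
  have hwpos : (0:ℝ) < ‖w‖ := norm_pos_iff.2 hw
  have hsW : (0:ℝ) < Real.sqrt d * ‖w‖ := mul_pos hdpos hwpos
  have hdd : Real.sqrt d * Real.sqrt d = (d:ℝ) := Real.mul_self_sqrt hdr.le
  have hnorm : ∀ x : EuclideanSpace ℝ (Fin d), ‖x‖ ^ 2 = (d : ℝ) → ‖x‖ = Real.sqrt d := by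
    intro x hx
    rw [← Real.sqrt_sq (norm_nonneg x), hx]
  set c : ℝ := kth / (Real.sqrt d * ‖w‖) with hc
  have hc0 : 0 < c := div_pos hk0 hsW
  have hc1 : c < 1 := (div_lt_one hsW).2 hk1
  constructor
  · intro x hx hxw
    rw [cos_angle, hnorm x hx]
    exact div_lt_div_same' hxw hsW
  · intro xr xs hr hs hrw hsw
    set ur : EuclideanSpace ℝ (Fin d) := (Real.sqrt d)⁻¹ • xr with hur
    set us : EuclideanSpace ℝ (Fin d) := (Real.sqrt d)⁻¹ • xs with hus
    set wn : EuclideanSpace ℝ (Fin d) := ‖w‖⁻¹ • w with hwn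
    have hnur : ‖ur‖ = 1 := by
      rw [hur, norm_smul, hnorm xr hr, norm_inv, Real.norm_eq_abs, abs_of_pos hdpos,
        inv_mul_cancel₀ hdpos.ne']
    have hnus : ‖us‖ = 1 := by
      rw [hus, norm_smul, hnorm xs hs, norm_inv, Real.norm_eq_abs, abs_of_pos hdpos,
        inv_mul_cancel₀ hdpos.ne']
    have hnwn : ‖wn‖ = 1 := by
      rw [hwn, norm_smul, norm_inv, norm_norm, inv_mul_cancel₀ hwpos.ne']
    have hA : (inner ℝ ur wn : ℝ) = inner ℝ xr w / (Real.sqrt d * ‖w‖) := by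
      rw [hur, hwn, real_inner_smul_left, real_inner_smul_right]
      field_simp
    have hB : (inner ℝ us wn : ℝ) = inner ℝ xs w / (Real.sqrt d * ‖w‖) := by
      rw [hus, hwn, real_inner_smul_left, real_inner_smul_right]
      field_simp
    set A : ℝ := inner ℝ ur wn
    set B : ℝ := inner ℝ us wn
    have hAc : c < A := by
      rw [hA, hc]; exact div_lt_div_same' hrw hsW
    have hBc : c < B := by
      rw [hB, hc]; exact div_lt_div_same' hsw hsW
    have hA1 : A ≤ 1 := by
      have := real_inner_le_norm ur wn
      rwa [hnur, hnwn, one_mul] at this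
    have hB1 : B ≤ 1 := by
      have := real_inner_le_norm us wn
      rwa [hnus, hnwn, one_mul] at this
    have hkey := key_inner ur us wn hnur hnus hnwn
    have hinner : (inner ℝ xr xs : ℝ) = (d:ℝ) * (inner ℝ ur us : ℝ) := by
      rw [hur, hus, real_inner_smul_left, real_inner_smul_right, ← hdd]
      field_simp
      rw [Real.sqrt_sq hdpos.le]
    have huv2 : 2*c^2 - 1 < (inner ℝ ur us : ℝ) := real_arith hc0 hA1 hB1 hAc hBc hkey
    have hcos : Real.cos (2 * Real.arccos c) = 2*c^2 - 1 := by
      rw [Real.cos_two_mul, Real.cos_arccos (by linarith) hc1.le]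
    rw [hcos, hinner]
    exact (mul_lt_mul_iff_right₀ hdr).2 huv2
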